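/- Let L be an affine line in ℝ^S intersecting the simplex Δ_S in a nondegenerate segment with endpoints a and b. Then the set λ_{a−b} intersects L in exactly one point, and this point lies in the relative interior of the segment [a,b]. -/
import Mathlib


open scoped BigOperators

noncomputable section

/-- The simplex of probability distributions on `S`. -/
def Delta (S : Type*) [Fintype S] : Set (S → ℝ) :=
  {μ | (∀ s, 0 ≤ μ s) ∧ ∑ s, μ s = 1}

/-- The (relative) interior of the simplex: strictly positive distributions. -/
def intDelta (S : Type*) [Fintype S] : Set (S → ℝ) :=
  {μ | (∀ s, 0 < μ s) ∧ ∑ s, μ s = 1}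

/-- The hyperplane of vectors with coordinate sum zero. -/
def V0 (S : Type*) [Fintype S] : Set (S → ℝ) :=
  {v | ∑ s, v s = 0}

/-- The set `λ_κ` of distributions satisfying the centrality equation of `κ`
(real powers, `rpow`, so `0 ^ x = 0` for `x > 0`). -/
def lam {S : Type*} [Fintype S] (κ : S → ℝ) : Set (S → ℝ) :=
  {μ ∈ Delta S |
    ∏ s ∈ Finset.univ.filter (fun s => 0 < κ s), (μ s) ^ (κ s) =
    ∏ s ∈ Finset.univ.filter (fun s => κ s < 0), (μ s) ^ (-(κ s))}

/-- `Λ_K`, the intersection of the `λ_κ` over `κ ∈ K`. -/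
def Lam {S : Type*} [Fintype S] (K : Set (S → ℝ)) : Set (S → ℝ) :=
  ⋂ κ ∈ K, lam κ

/-- if a line meets the simplex `Δ_S` in a nondegenerate segment with
endpoints `a` and `b`, then `λ_{a-b}` meets the line in exactly one point, which lies
in the open segment `(a, b)`. -/
theorem lam_inter_line_eq_singleton (S : Type*) [Fintype S] (a b : S → ℝ)
    (ha : a ∈ Delta S) (hb : b ∈ Delta S) (hab : a ≠ b)
    (q : S) (haq : a q = 0) (hbq : 0 < b q)
    (r : S) (hbr : b r = 0) (har : 0 < a r) :
    ∃ μ : S → ℝ,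
      lam (a - b) ∩ {x | ∃ t : ℝ, x = a + t • (b - a)} = {μ} ∧
      μ ∈ openSegment ℝ a b := by
  classical
  obtain ⟨ha0, ha1⟩ := ha
  obtain ⟨hb0, hb1⟩ := hb
  set κ : S → ℝ := a - b with hκdef
  set P : Finset S := Finset.univ.filter (fun s => 0 < κ s) with hPdef
  set N : Finset S := Finset.univ.filter (fun s => κ s < 0) with hNdef
  have hκs : ∀ s, κ s = a s - b s := fun s => rfl
  have hrP : r ∈ P := by
    simp only [hPdef, Finset.mem_filter, Finset.mem_univ, true_and, hκs, hbr, sub_zero]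
    exact har
  have hqN : q ∈ N := by
    simp only [hNdef, Finset.mem_filter, Finset.mem_univ, true_and, hκs, haq, zero_sub]
    exact neg_lt_zero.mpr hbq
  have hPab : ∀ s ∈ P, b s < a s := by
    intro s hs
    have := (Finset.mem_filter.mp hs).2
    rw [hκs] at this; linarith
  have hNab : ∀ s ∈ N, a s < b s := by
    intro s hs
    have := (Finset.mem_filter.mp hs).2
    rw [hκs] at this; linarith
  -- coordinates of line points
  have hcoord : ∀ (t : ℝ) (s : S), (a + t • (b - a)) s = (1 - t) * a s + t * b s := by
    intro t s
    simp only [Pi.add_apply, Pi.smul_apply, Pi.sub_apply, smul_eq_mul]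
    ring
  -- the two product functions
  set g : ℝ → ℝ := fun t => ∏ s ∈ P, ((1 - t) * a s + t * b s) ^ (κ s) with hgdef
  set h : ℝ → ℝ := fun t => ∏ s ∈ N, ((1 - t) * a s + t * b s) ^ (-(κ s)) with hhdef
  set F : ℝ → ℝ := fun t => g t - h t with hFdef
  -- positivity of coordinates
  have hXP : ∀ s ∈ P, ∀ t : ℝ, 0 ≤ t → t < 1 → 0 < (1 - t) * a s + t * b s := by
    intro s hs t ht0 ht1
    have h1 : 0 < a s := lt_of_le_of_lt (hb0 s) (hPab s hs)
    have : 0 < (1 - t) * a s := mul_pos (by linarith) h1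
    nlinarith [mul_nonneg ht0 (hb0 s)]
  have hXN : ∀ s ∈ N, ∀ t : ℝ, 0 < t → t ≤ 1 → 0 < (1 - t) * a s + t * b s := by
    intro s hs t ht0 ht1
    have h1 : 0 < b s := lt_of_le_of_lt (ha0 s) (hNab s hs)
    have : 0 < t * b s := mul_pos ht0 h1
    nlinarith [mul_nonneg (by linarith : (0:ℝ) ≤ 1 - t) (ha0 s)]
  -- g : positive on [0,1), zero at 1, strictly decreasing on [0,1]
  have hg_pos : ∀ t : ℝ, 0 ≤ t → t < 1 → 0 < g t := by
    intro t ht0 ht1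
    exact Finset.prod_pos fun s hs => Real.rpow_pos_of_pos (hXP s hs t ht0 ht1) _
  have hg1 : g 1 = 0 := by
    refine Finset.prod_eq_zero hrP ?_
    have : (1 - (1:ℝ)) * a r + 1 * b r = 0 := by rw [hbr]; ring
    rw [this]
    exact Real.zero_rpow (ne_of_gt ((Finset.mem_filter.mp hrP).2))
  have hg_anti : ∀ t1 t2 : ℝ, 0 ≤ t1 → t2 ≤ 1 → t1 < t2 → g t2 < g t1 := by
    intro t1 t2 ht1 ht2 h12
    rcases eq_or_lt_of_le ht2 with h | h
    · rw [h, hg1]; exact hg_pos t1 ht1 (by linarith)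
    · refine Finset.prod_lt_prod_of_nonempty ?_ ?_ ⟨r, hrP⟩
      · intro s hs
        exact Real.rpow_pos_of_pos (hXP s hs t2 (by linarith) h) _
      · intro s hs
        have hκpos := (Finset.mem_filter.mp hs).2
        refine Real.rpow_lt_rpow (le_of_lt (hXP s hs t2 (by linarith) h)) ?_ hκpos
        nlinarith [hPab s hs]
  -- h : zero at 0, positive on (0,1], strictly increasing on [0,1]
  have hh_pos : ∀ t : ℝ, 0 < t → t ≤ 1 → 0 < h t := by
    intro t ht0 ht1
    exact Finset.prod_pos fun s hs => Real.rpow_pos_of_pos (hXN s hs t ht0 ht1) _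
  have hh0 : h 0 = 0 := by
    refine Finset.prod_eq_zero hqN ?_
    have : (1 - (0:ℝ)) * a q + 0 * b q = 0 := by rw [haq]; ring
    rw [this]
    refine Real.zero_rpow (ne_of_gt ?_)
    have := (Finset.mem_filter.mp hqN).2
    linarith
  have hh_mono : ∀ t1 t2 : ℝ, 0 ≤ t1 → t2 ≤ 1 → t1 < t2 → h t1 < h t2 := by
    intro t1 t2 ht1 ht2 h12
    rcases eq_or_lt_of_le ht1 with h | h
    · rw [← h, hh0]; exact hh_pos t2 (by linarith) ht2
    · refine Finset.prod_lt_prod_of_nonempty ?_ ?_ ⟨q, hqN⟩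
      · intro s hs
        exact Real.rpow_pos_of_pos (hXN s hs t1 h (by linarith)) _
      · intro s hs
        have hκneg := (Finset.mem_filter.mp hs).2
        refine Real.rpow_lt_rpow (le_of_lt (hXN s hs t1 h (by linarith))) ?_ (by linarith)
        nlinarith [hNab s hs]
  -- F is strictly decreasing on [0,1]
  have hF_anti : StrictAntiOn F (Set.Icc (0:ℝ) 1) := by
    intro t1 hm1 t2 hm2 h12
    have h1 := hg_anti t1 t2 hm1.1 hm2.2 h12
    have h2 := hh_mono t1 t2 hm1.1 hm2.2 h12
    simp only [hFdef]
    linarith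
  -- continuity
  have hbase : ∀ s : S, Continuous fun t : ℝ => (1 - t) * a s + t * b s := by
    intro s
    exact ((continuous_const.sub continuous_id).mul continuous_const).add
      (continuous_id.mul continuous_const)
  have hcontpow : ∀ (s : S) (c : ℝ), 0 < c →
      Continuous fun t : ℝ => ((1 - t) * a s + t * b s) ^ c := by
    intro s c hc
    rw [continuous_iff_continuousAt]
    intro t
    exact (Real.continuousAt_rpow_const _ c (Or.inr hc.le)).comp (hbase s).continuousAt
  have hg_cont : Continuous g := by
    refine continuous_finset_prod _ fun s hs => ?_
    exact hcontpow s (κ s) ((Finset.mem_filter.mp hs).2)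
  have hh_cont : Continuous h := by
    refine continuous_finset_prod _ fun s hs => ?_
    have := (Finset.mem_filter.mp hs).2
    exact hcontpow s (-(κ s)) (by linarith)
  have hF_cont : Continuous F := hg_cont.sub hh_cont
  -- endpoint values
  have hF0 : 0 < F 0 := by
    have := hg_pos 0 le_rfl one_pos
    simp only [hFdef, hh0]
    linarith
  have hF1 : F 1 < 0 := by
    have := hh_pos 1 one_pos le_rfl
    simp only [hFdef, hg1]
    linarith
  -- IVT
  obtain ⟨t₀, ht₀mem, ht₀⟩ : ∃ t ∈ Set.Icc (0:ℝ) 1, F t = 0 := by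
    have hsub := intermediate_value_Icc' (by norm_num : (0:ℝ) ≤ 1) hF_cont.continuousOn
    have h0mem : (0:ℝ) ∈ Set.Icc (F 1) (F 0) := ⟨hF1.le, hF0.le⟩
    obtain ⟨t, ht, htF⟩ := hsub h0mem
    exact ⟨t, ht, htF⟩
  have ht₀0 : 0 < t₀ := by
    rcases lt_or_eq_of_le ht₀mem.1 with h | h
    · exact h
    · exfalso; rw [← h] at ht₀; linarith
  have ht₀1 : t₀ < 1 := by
    rcases lt_or_eq_of_le ht₀mem.2 with h | h
    · exact h
    · exfalso; rw [h] at ht₀; linarith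
  -- line points with parameter in [0,1] are in Delta
  have hDelta : ∀ t : ℝ, 0 ≤ t → t ≤ 1 → (a + t • (b - a)) ∈ Delta S := by
    intro t ht0 ht1
    constructor
    · intro s
      rw [hcoord]
      have := mul_nonneg (by linarith : (0:ℝ) ≤ 1 - t) (ha0 s)
      have := mul_nonneg ht0 (hb0 s)
      linarith
    · have : ∑ s, (a + t • (b - a)) s = ∑ s, ((1 - t) * a s + t * b s) :=
        Finset.sum_congr rfl fun s _ => hcoord t s
      rw [this, Finset.sum_add_distrib, ← Finset.mul_sum, ← Finset.mul_sum, ha1, hb1]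
      ring
  -- lam membership characterization for line points
  have hlam_iff : ∀ t : ℝ,
      ((a + t • (b - a)) ∈ lam κ ↔ (a + t • (b - a)) ∈ Delta S ∧ g t = h t) := by
    intro t
    have e1 : ∏ s ∈ P, ((a + t • (b - a)) s) ^ (κ s) = g t :=
      Finset.prod_congr rfl fun s _ => by rw [hcoord]
    have e2 : ∏ s ∈ N, ((a + t • (b - a)) s) ^ (-(κ s)) = h t :=
      Finset.prod_congr rfl fun s _ => by rw [hcoord]
    constructor
    · rintro ⟨hD, hEq⟩
      rw [← hPdef, ← hNdef, e1, e2] at hEq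
      exact ⟨hD, hEq⟩
    · rintro ⟨hD, hEq⟩
      refine ⟨hD, ?_⟩
      rw [← hPdef, ← hNdef, e1, e2]
      exact hEq
  refine ⟨a + t₀ • (b - a), ?_, ?_⟩
  · ext x
    simp only [Set.mem_inter_iff, Set.mem_setOf_eq, Set.mem_singleton_iff]
    constructor
    · rintro ⟨hxlam, t, rfl⟩
      have hD := hxlam.1
      have hnn := hD.1
      have hq' := hnn q
      have hr' := hnn r
      rw [hcoord] at hq' hr'
      rw [haq] at hq'
      rw [hbr] at hr'
      have ht0 : 0 ≤ t := by nlinarith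
      have ht1 : t ≤ 1 := by nlinarith
      have hgh : g t = h t := ((hlam_iff t).mp hxlam).2
      have hFt : F t = 0 := by simp only [hFdef]; linarith
      have : t = t₀ :=
        hF_anti.injOn ⟨ht0, ht1⟩ ht₀mem (by rw [hFt, ht₀])
      rw [this]
    · rintro rfl
      refine ⟨(hlam_iff t₀).mpr ⟨hDelta t₀ ht₀0.le ht₀1.le, ?_⟩, t₀, rfl⟩
      simp only [hFdef] at ht₀
      linarith
  · rw [openSegment_eq_image]
    refine ⟨t₀, ⟨ht₀0, ht₀1⟩, ?_⟩
    funext s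
    simp only [Pi.add_apply, Pi.smul_apply, Pi.sub_apply, smul_eq_mul]
    ring
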